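/- The vector field v1(x,y,z) = (−y, −x, −1) on ℝ³ commutes with both frame fields: [v1, X1] = 0 and [v1, X2] = 0 identically, where X1 = (cosh z, sinh z, 0) and X2 = (0,0,1). -/

import Mathlib

/-- The vector field `X1(x,y,z) = (cosh z, sinh z, 0)` on `ℝ³`. -/
noncomputable def X1 (p : ℝ × ℝ × ℝ) : ℝ × ℝ × ℝ :=
  (Real.cosh p.2.2, Real.sinh p.2.2, 0)

/-- The vector field `X2(x,y,z) = (0, 0, 1)` on `ℝ³`. -/
def X2 (_p : ℝ × ℝ × ℝ) : ℝ × ℝ × ℝ :=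
  (0, 0, 1)

/-- The infinitesimal symmetry `v1(x,y,z) = (−y, −x, −1)` on `ℝ³`. -/
def v1 (p : ℝ × ℝ × ℝ) : ℝ × ℝ × ℝ :=
  (-p.2.1, -p.1, -1)

/-- The Lie bracket of vector fields on `ℝ³`:
`[V,W](p) = DW(p)·V(p) − DV(p)·W(p)`. -/
noncomputable def lieBracketR3 (V W : ℝ × ℝ × ℝ → ℝ × ℝ × ℝ) (p : ℝ × ℝ × ℝ) : ℝ × ℝ × ℝ :=
  fderiv ℝ W p (V p) - fderiv ℝ V p (W p)

open Real ContinuousLinearMap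

/-- The (constant) total derivative of `v1`. -/
noncomputable def Lv1 : (ℝ × ℝ × ℝ) →L[ℝ] (ℝ × ℝ × ℝ) :=
  (-(fst ℝ ℝ ℝ ∘L snd ℝ ℝ (ℝ × ℝ))).prod ((-(fst ℝ ℝ (ℝ × ℝ))).prod 0)

lemma hv1 (p : ℝ × ℝ × ℝ) : HasFDerivAt v1 Lv1 p := by
  have h1 : HasFDerivAt (fun q : ℝ × ℝ × ℝ => -q.2.1)
      (-(fst ℝ ℝ ℝ ∘L snd ℝ ℝ (ℝ × ℝ))) p :=
    ((hasFDerivAt_fst.comp p hasFDerivAt_snd)).neg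
  have h2 : HasFDerivAt (fun q : ℝ × ℝ × ℝ => -q.1) (-(fst ℝ ℝ (ℝ × ℝ))) p :=
    hasFDerivAt_fst.neg
  have h3 : HasFDerivAt (fun _ : ℝ × ℝ × ℝ => (-1 : ℝ)) (0 : (ℝ × ℝ × ℝ) →L[ℝ] ℝ) p :=
    hasFDerivAt_const _ _
  exact h1.prodMk (h2.prodMk h3)

/-- The total derivative of `X1` at `p`. -/
noncomputable def LX1 (p : ℝ × ℝ × ℝ) : (ℝ × ℝ × ℝ) →L[ℝ] (ℝ × ℝ × ℝ) :=
  (Real.sinh p.2.2 • (snd ℝ ℝ ℝ ∘L snd ℝ ℝ (ℝ × ℝ))).prod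
    ((Real.cosh p.2.2 • (snd ℝ ℝ ℝ ∘L snd ℝ ℝ (ℝ × ℝ))).prod 0)

lemma hX1 (p : ℝ × ℝ × ℝ) : HasFDerivAt X1 (LX1 p) p := by
  have hz : HasFDerivAt (fun q : ℝ × ℝ × ℝ => q.2.2)
      (snd ℝ ℝ ℝ ∘L snd ℝ ℝ (ℝ × ℝ)) p :=
    hasFDerivAt_snd.comp p hasFDerivAt_snd
  have h1 : HasFDerivAt (fun q : ℝ × ℝ × ℝ => Real.cosh q.2.2)
      (Real.sinh p.2.2 • (snd ℝ ℝ ℝ ∘L snd ℝ ℝ (ℝ × ℝ))) p :=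
    by have := (Real.hasDerivAt_cosh p.2.2).comp_hasFDerivAt p hz; exact this
  have h2 : HasFDerivAt (fun q : ℝ × ℝ × ℝ => Real.sinh q.2.2)
      (Real.cosh p.2.2 • (snd ℝ ℝ ℝ ∘L snd ℝ ℝ (ℝ × ℝ))) p :=
    by have := (Real.hasDerivAt_sinh p.2.2).comp_hasFDerivAt p hz; exact this
  have h3 : HasFDerivAt (fun _ : ℝ × ℝ × ℝ => (0 : ℝ)) (0 : (ℝ × ℝ × ℝ) →L[ℝ] ℝ) p :=
    hasFDerivAt_const _ _
  exact h1.prodMk (h2.prodMk h3)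

/-- `v1` commutes with both frame fields: `[v1, X1] = 0` and `[v1, X2] = 0`. -/
theorem v1_commutes_with_frame (p : ℝ × ℝ × ℝ) :
    lieBracketR3 v1 X1 p = 0 ∧ lieBracketR3 v1 X2 p = 0 := by
  have e1 : fderiv ℝ v1 p = Lv1 := (hv1 p).fderiv
  have e2 : fderiv ℝ X1 p = LX1 p := (hX1 p).fderiv
  have e3 : fderiv ℝ X2 p = 0 := (hasFDerivAt_const (0,0,1) p).fderiv
  constructor
  · simp [lieBracketR3, e1, e2, Lv1, LX1, v1, X1, Prod.ext_iff, mul_comm]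
  · simp [lieBracketR3, e1, e3, Lv1, X2, Prod.ext_iff]
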